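/- Let y_1,...,y_n be nonnegative reals summing to 1 and let k ≥ 2. For each N, let G_N be the disjoint union over i of hyperstars S^(k)_{b_i(N)} where b_i(N) = ⌊y_i^{1/k} N/(k-1)!⌋. Then for each j ≥ 2, hom(S^(k)_{kj};G_N)/hom(S^(k)_k;G_N)^j → Σ_i y_i^j as N → ∞. -/

import Mathlib

/-- The edge set of the `k`-uniform hyperstar with `b` branches. -/
def hyperstarEdges (k b : ℕ) : Finset (Finset (Option (Fin b × Fin (k - 1)))) :=
  Finset.image (fun t : Fin b =>
    insert none ((Finset.univ : Finset (Fin (k - 1))).image (fun s => some (t, s))))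
    Finset.univ

/-- The edge set of the disjoint union of hyperstars `S^(k)_{b i}`, `i = 1, …, n`. -/
def hyperstarUnionEdges (k : ℕ) {n : ℕ} (b : Fin n → ℕ) :
    Finset (Finset (Σ i : Fin n, Option (Fin (b i) × Fin (k - 1)))) :=
  Finset.univ.biUnion fun i =>
    (hyperstarEdges k (b i)).image (Finset.image (fun v => ⟨i, v⟩))

/-- The number of homomorphisms between hypergraphs given by their edge sets. -/
noncomputable def hypHomCount {VH VG : Type*} [DecidableEq VG]
    (EH : Finset (Finset VH)) (EG : Finset (Finset VG)) : ℕ :=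
  Nat.card {f : VH → VG // ∀ e ∈ EH, e.image f ∈ EG}

open Finset

def uEdge (k : ℕ) {n : ℕ} (b : Fin n → ℕ) (i : Fin n) (t : Fin (b i)) :
    Finset (Σ i : Fin n, Option (Fin (b i) × Fin (k - 1))) :=
  insert ⟨i, none⟩ (Finset.univ.image (fun s : Fin (k - 1) => ⟨i, some (t, s)⟩))

lemma mem_uEdge {k n : ℕ} {b : Fin n → ℕ} {i : Fin n} {t : Fin (b i)}
    {x : Σ i : Fin n, Option (Fin (b i) × Fin (k - 1))} :
    x ∈ uEdge k b i t ↔ x = ⟨i, none⟩ ∨ ∃ s, x = ⟨i, some (t, s)⟩ := by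
  simp [uEdge, eq_comm]

lemma mem_hyperstarUnionEdges {k n : ℕ} {b : Fin n → ℕ}
    {e : Finset (Σ i : Fin n, Option (Fin (b i) × Fin (k - 1)))} :
    e ∈ hyperstarUnionEdges k b ↔ ∃ i t, e = uEdge k b i t := by
  simp only [hyperstarUnionEdges, hyperstarEdges, Finset.mem_biUnion, Finset.mem_image,
    Finset.mem_univ, true_and]
  constructor
  · rintro ⟨i, e', ⟨t, rfl⟩, rfl⟩
    exact ⟨i, t, by simp [uEdge, Finset.image_insert, Finset.image_image]; rfl⟩
  · rintro ⟨i, t, rfl⟩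
    exact ⟨i, _, ⟨t, rfl⟩, by simp [uEdge, Finset.image_insert, Finset.image_image]; rfl⟩

lemma card_uEdge {k n : ℕ} (hk : 2 ≤ k) {b : Fin n → ℕ} (i : Fin n) (t : Fin (b i)) :
    (uEdge k b i t).card = k := by
  rw [uEdge, Finset.card_insert_of_notMem (by simp), Finset.card_image_of_injective _
    (fun a a' h => by simpa using h)]
  simp; omega

lemma center_mem_uEdge {k n : ℕ} {b : Fin n → ℕ} {i : Fin n} {t : Fin (b i)} :
    (⟨i, none⟩ : Σ i : Fin n, Option (Fin (b i) × Fin (k - 1))) ∈ uEdge k b i t :=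
  Finset.mem_insert_self _ _

lemma leaf_mem_uEdge {k n : ℕ} {b : Fin n → ℕ} {i : Fin n} {t : Fin (b i)} {s : Fin (k - 1)} :
    (⟨i, some (t, s)⟩ : Σ i : Fin n, Option (Fin (b i) × Fin (k - 1))) ∈ uEdge k b i t :=
  mem_uEdge.2 (Or.inr ⟨s, rfl⟩)

lemma eq_of_center_mem {k n : ℕ} {b : Fin n → ℕ} {i i' : Fin n} {t' : Fin (b i')}
    (h : (⟨i, none⟩ : Σ i : Fin n, Option (Fin (b i) × Fin (k - 1))) ∈ uEdge k b i' t') :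
    i' = i := by
  rcases mem_uEdge.1 h with h1 | ⟨s, h1⟩
  · rcases (Sigma.mk.inj_iff.1 h1) with ⟨rfl, -⟩; rfl
  · rcases (Sigma.mk.inj_iff.1 h1) with ⟨rfl, h2⟩
    exact absurd (eq_of_heq h2) (by simp)

lemma edge_eq_of_leaf_mem {k n : ℕ} {b : Fin n → ℕ} {i : Fin n} {t0 : Fin (b i)}
    {s0 : Fin (k - 1)} {i' : Fin n} {t' : Fin (b i')}
    (h : (⟨i, some (t0, s0)⟩ : Σ i : Fin n, Option (Fin (b i) × Fin (k - 1)))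
      ∈ uEdge k b i' t') :
    uEdge k b i' t' = uEdge k b i t0 := by
  rcases mem_uEdge.1 h with h1 | ⟨s, h1⟩
  · rcases (Sigma.mk.inj_iff.1 h1) with ⟨rfl, h2⟩
    exact absurd (eq_of_heq h2) (by simp)
  · rcases (Sigma.mk.inj_iff.1 h1) with ⟨rfl, h2⟩
    have h3 := eq_of_heq h2
    have : t0 = t' := by
      have := Option.some.inj h3
      exact (Prod.mk_inj.1 this).1
    rw [this]

lemma uEdge_inj {k n : ℕ} (hk : 2 ≤ k) {b : Fin n → ℕ} {i : Fin n} {t t' : Fin (b i)}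
    (h : uEdge k b i t = uEdge k b i t') : t = t' := by
  have hs0 : (0 : ℕ) < k - 1 := by omega
  have hm : (⟨i, some (t, ⟨0, hs0⟩)⟩ : Σ i : Fin n, Option (Fin (b i) × Fin (k - 1)))
      ∈ uEdge k b i t' := h ▸ leaf_mem_uEdge
  rcases mem_uEdge.1 hm with h1 | ⟨s, h1⟩
  · rcases (Sigma.mk.inj_iff.1 h1) with ⟨-, h2⟩
    exact absurd (eq_of_heq h2) (by simp)
  · rcases (Sigma.mk.inj_iff.1 h1) with ⟨-, h2⟩
    have h3 := eq_of_heq h2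
    exact (Prod.mk_inj.1 (Option.some.inj h3)).1
private def phiMap {V : Type*} [DecidableEq V] {d : ℕ} (S : Finset V) (e : Fin d ≃ S) :
    {h : Fin d → V // Finset.image h Finset.univ = S} :=
  ⟨fun x => (e x : V), by
    ext v
    simp only [mem_image, mem_univ, true_and]
    constructor
    · rintro ⟨x, rfl⟩; exact (e x).2
    · intro hv; exact ⟨e.symm ⟨v, hv⟩, by simp⟩⟩

lemma card_image_eq_fact {V : Type*} [Fintype V] [DecidableEq V] (d : ℕ) (S : Finset V)
    (hS : S.card = d) :
    Fintype.card {h : Fin d → V // Finset.image h Finset.univ = S} = d.factorial := by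
  have hcards : Fintype.card (Fin d) = Fintype.card S := by simp [hS]
  have hΦ : Function.Bijective (phiMap S (d := d)) := by
    constructor
    · intro e e' h
      ext x
      have h2 := congrArg (fun z => z.1 x) h
      simp only [phiMap] at h2
      exact h2
    · rintro ⟨h, hh⟩
      have hmem : ∀ x, h x ∈ S := fun x => by
        rw [← hh]; exact mem_image_of_mem _ (mem_univ x)
      have hinj : Function.Injective h := by
        have hcc : (Finset.univ.image h).card = (Finset.univ : Finset (Fin d)).card := by
          rw [hh, hS]; simp
        have hio := Finset.injOn_of_card_image_eq hcc
        intro a b hab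
        exact hio (mem_coe.2 (mem_univ a)) (mem_coe.2 (mem_univ b)) hab
      set h' : Fin d → S := fun x => ⟨h x, hmem x⟩ with hh'
      have hinj' : Function.Injective h' := fun a b hab => hinj (congrArg Subtype.val hab)
      have hbij : Function.Bijective h' :=
        (Fintype.bijective_iff_injective_and_card h').2 ⟨hinj', hcards⟩
      refine ⟨Equiv.ofBijective h' hbij, ?_⟩
      apply Subtype.ext
      funext x
      rfl
  rw [← Fintype.card_of_bijective hΦ, Fintype.card_equiv (Fintype.equivOfCardEq hcards)]
  simp

lemma card_insert_image_eq_fact {V : Type*} [Fintype V] [DecidableEq V] (k : ℕ) (hk : 1 ≤ k)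
    (S : Finset V) (c : V) (hc : c ∈ S) (hS : S.card = k) :
    Fintype.card {h : Fin (k-1) → V // insert c (Finset.image h Finset.univ) = S}
      = (k-1).factorial := by
  have key : ∀ h : Fin (k-1) → V,
      insert c (Finset.image h Finset.univ) = S ↔ Finset.image h Finset.univ = S.erase c := by
    intro h
    constructor
    · intro hins
      have hcnot : c ∉ Finset.image h Finset.univ := by
        intro hcim
        have : Finset.image h Finset.univ = S := by rw [← hins, insert_eq_self.2 hcim]
        have hle : (Finset.image h Finset.univ).card ≤ k - 1 := by
          refine le_trans Finset.card_image_le ?_; simp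
        rw [this, hS] at hle; omega
      ext v
      constructor
      · intro hv
        refine mem_erase.2 ⟨fun hvc => hcnot (hvc ▸ hv), ?_⟩
        rw [← hins]; exact mem_insert_of_mem hv
      · intro hv
        rcases mem_erase.1 hv with ⟨hne, hvS⟩
        rw [← hins] at hvS
        rcases mem_insert.1 hvS with h1 | h1
        · exact absurd h1 hne
        · exact h1
    · intro him
      rw [him, insert_erase hc]
  calc Fintype.card {h : Fin (k-1) → V // insert c (Finset.image h Finset.univ) = S}
      = Fintype.card {h : Fin (k-1) → V // Finset.image h Finset.univ = S.erase c} :=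
        Fintype.card_congr (Equiv.subtypeEquivRight key)
    _ = (k-1).factorial := card_image_eq_fact _ _ (by rw [Finset.card_erase_of_mem hc, hS])

instance fintypeInsertHom (k : ℕ) {n : ℕ} (b : Fin n → ℕ)
    (c : Σ i : Fin n, Option (Fin (b i) × Fin (k - 1))) :
    Fintype {h : Fin (k - 1) → Σ i : Fin n, Option (Fin (b i) × Fin (k - 1)) //
      insert c (Finset.image h Finset.univ) ∈ hyperstarUnionEdges k b} :=
  inferInstance

noncomputable def Ncount (k : ℕ) {n : ℕ} (b : Fin n → ℕ)
    (c : Σ i : Fin n, Option (Fin (b i) × Fin (k - 1))) : ℕ :=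
  Fintype.card {h : Fin (k - 1) → Σ i : Fin n, Option (Fin (b i) × Fin (k - 1)) //
    insert c (Finset.image h Finset.univ) ∈ hyperstarUnionEdges k b}

lemma Ncount_center {k n : ℕ} (hk : 2 ≤ k) (b : Fin n → ℕ) (i : Fin n) :
    Ncount k b ⟨i, none⟩ = b i * (k - 1).factorial := by
  classical
  set c : Σ i : Fin n, Option (Fin (b i) × Fin (k - 1)) := ⟨i, none⟩ with hc
  rw [Ncount, Fintype.card_subtype]
  have hsplit : (Finset.univ.filter
        (fun h : Fin (k-1) → Σ i : Fin n, Option (Fin (b i) × Fin (k - 1)) =>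
          insert c (Finset.image h Finset.univ) ∈ hyperstarUnionEdges k b))
      = Finset.univ.biUnion (fun t : Fin (b i) => Finset.univ.filter
          (fun h : Fin (k-1) → Σ i : Fin n, Option (Fin (b i) × Fin (k - 1)) =>
            insert c (Finset.image h Finset.univ) = uEdge k b i t)) := by
    ext h
    simp only [mem_biUnion, mem_filter, mem_univ, true_and]
    constructor
    · intro hmem
      rcases mem_hyperstarUnionEdges.1 hmem with ⟨i', t', he⟩
      have hcm : c ∈ uEdge k b i' t' := he ▸ Finset.mem_insert_self _ _
      rcases eq_of_center_mem hcm with rfl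
      exact ⟨t', he⟩
    · rintro ⟨t, ht⟩
      rw [ht]
      exact mem_hyperstarUnionEdges.2 ⟨i, t, rfl⟩
  rw [hsplit, Finset.card_biUnion]
  · have heach : ∀ t : Fin (b i), (Finset.univ.filter
        (fun h : Fin (k-1) → Σ i : Fin n, Option (Fin (b i) × Fin (k - 1)) =>
          insert c (Finset.image h Finset.univ) = uEdge k b i t)).card
        = (k - 1).factorial := by
      intro t
      rw [← Fintype.card_subtype]
      exact card_insert_image_eq_fact k (by omega) _ c center_mem_uEdge (card_uEdge hk i t)
    simp only [heach, Finset.sum_const, Finset.card_univ, Fintype.card_fin, smul_eq_mul]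
  · intro t _ t' _ hne
    rw [Function.onFun, Finset.disjoint_left]
    intro h h1 h2
    rw [mem_filter] at h1 h2
    exact hne (uEdge_inj hk (h1.2.symm.trans h2.2))

lemma Ncount_leaf {k n : ℕ} (hk : 2 ≤ k) (b : Fin n → ℕ) (i : Fin n) (t0 : Fin (b i))
    (s0 : Fin (k - 1)) :
    Ncount k b ⟨i, some (t0, s0)⟩ = (k - 1).factorial := by
  classical
  set c : Σ i : Fin n, Option (Fin (b i) × Fin (k - 1)) := ⟨i, some (t0, s0)⟩ with hc
  have hiff : ∀ h : Fin (k-1) → Σ i : Fin n, Option (Fin (b i) × Fin (k - 1)),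
      insert c (Finset.image h Finset.univ) ∈ hyperstarUnionEdges k b ↔
      insert c (Finset.image h Finset.univ) = uEdge k b i t0 := by
    intro h
    constructor
    · intro hmem
      rcases mem_hyperstarUnionEdges.1 hmem with ⟨i', t', he⟩
      have hcm : c ∈ uEdge k b i' t' := he ▸ Finset.mem_insert_self _ _
      rw [he, edge_eq_of_leaf_mem hcm]
    · intro he
      rw [he]
      exact mem_hyperstarUnionEdges.2 ⟨i, t0, rfl⟩
  rw [Ncount, Fintype.card_congr (Equiv.subtypeEquivRight hiff)]
  exact card_insert_image_eq_fact k (by omega) _ c leaf_mem_uEdge (card_uEdge hk i t0)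

lemma hom_iff {k m : ℕ} {V : Type*} [DecidableEq V] {EG : Finset (Finset V)}
    (f : Option (Fin m × Fin (k - 1)) → V) :
    (∀ e ∈ hyperstarEdges k m, e.image f ∈ EG) ↔
      ∀ t : Fin m, insert (f none)
        (Finset.image (fun s : Fin (k-1) => f (some (t, s))) Finset.univ) ∈ EG := by
  simp only [hyperstarEdges, Finset.mem_image, Finset.mem_univ, true_and]
  constructor
  · intro H t
    have h1 := H _ ⟨t, rfl⟩
    rwa [Finset.image_insert, Finset.image_image] at h1
  · rintro H e ⟨t, rfl⟩
    rw [Finset.image_insert, Finset.image_image]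
    exact H t

def homEquiv (k m : ℕ) {V : Type*} [DecidableEq V] (EG : Finset (Finset V)) :
    {f : Option (Fin m × Fin (k - 1)) → V // ∀ e ∈ hyperstarEdges k m, e.image f ∈ EG} ≃
    (Σ c : V, (Fin m → {h : Fin (k - 1) → V //
      insert c (Finset.image h Finset.univ) ∈ EG})) where
  toFun f := ⟨f.1 none, fun t => ⟨fun s => f.1 (some (t, s)), (hom_iff f.1).1 f.2 t⟩⟩
  invFun x := ⟨fun o => match o with
    | none => x.1
    | some (t, s) => (x.2 t).1 s,
    (hom_iff _).2 (fun t => (x.2 t).2)⟩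
  left_inv f := by
    apply Subtype.ext
    funext o
    rcases o with _ | ⟨t, s⟩ <;> rfl
  right_inv x := rfl

lemma hypHomCount_eq (k m : ℕ) {n : ℕ} (b : Fin n → ℕ) :
    hypHomCount (hyperstarEdges k m) (hyperstarUnionEdges k b)
      = ∑ c : (Σ i : Fin n, Option (Fin (b i) × Fin (k - 1))), (Ncount k b c) ^ m := by
  classical
  rw [hypHomCount, Nat.card_congr (homEquiv k m (hyperstarUnionEdges k b)),
    Nat.card_eq_fintype_card, Fintype.card_sigma]
  congr 1
  funext c
  rw [Fintype.card_fun, Fintype.card_fin]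
  rfl

lemma countFormula {k n : ℕ} (hk : 2 ≤ k) (m : ℕ) (b : Fin n → ℕ) :
    hypHomCount (hyperstarEdges k m) (hyperstarUnionEdges k b)
      = ∑ i, (((k - 1).factorial * b i) ^ m
          + b i * (k - 1) * ((k - 1).factorial) ^ m) := by
  rw [hypHomCount_eq]
  rw [← Finset.univ_sigma_univ, Finset.sum_sigma]
  congr 1
  funext i
  rw [Fintype.sum_option]
  have h1 : Ncount k b ⟨i, none⟩ = b i * (k - 1).factorial := Ncount_center hk b i
  have h2 : ∀ p : Fin (b i) × Fin (k - 1), Ncount k b ⟨i, some p⟩ = (k - 1).factorial := by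
    rintro ⟨t, s⟩; exact Ncount_leaf hk b i t s
  rw [h1]
  simp only [h2, Finset.sum_const, Finset.card_univ, Fintype.card_prod, Fintype.card_fin,
    smul_eq_mul]
  ring

open Filter Topology

lemma floor_scaled_tendsto {a : ℝ} (ha : 0 ≤ a) :
    Tendsto (fun N : ℕ => (⌊a * (N : ℝ)⌋₊ : ℝ) / (N : ℝ)) atTop (𝓝 a) :=
  (tendsto_nat_floor_mul_div_atTop ha).comp tendsto_natCast_atTop_atTop

lemma scaled_count_tendsto {n : ℕ} (y : Fin n → ℝ) (hy : ∀ i, 0 ≤ y i)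
    (k : ℕ) (hk : 2 ≤ k) (m : ℕ) (hm : 2 ≤ m) :
    Tendsto (fun N : ℕ =>
      (hypHomCount (hyperstarEdges k m) (hyperstarUnionEdges k
        (fun i => ⌊(y i) ^ ((1 : ℝ) / k) * N / (k - 1).factorial⌋₊)) : ℝ) / (N : ℝ) ^ m)
      atTop (𝓝 (∑ i, (y i ^ ((1 : ℝ) / k)) ^ m)) := by
  have hfact : (0 : ℝ) < ((k - 1).factorial : ℝ) := by positivity
  -- limit of each scaled branch count
  have hB : ∀ i : Fin n, Tendsto (fun N : ℕ =>
      ((⌊(y i) ^ ((1 : ℝ) / k) * N / (k - 1).factorial⌋₊ : ℕ) : ℝ) / (N : ℝ))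
      atTop (𝓝 ((y i) ^ ((1 : ℝ) / k) / (k - 1).factorial)) := by
    intro i
    have ha : (0 : ℝ) ≤ (y i) ^ ((1 : ℝ) / k) / (k - 1).factorial := by
      apply div_nonneg (Real.rpow_nonneg (hy i) _) hfact.le
    have := floor_scaled_tendsto ha
    convert this using 2 with N
    rw [div_mul_eq_mul_div, mul_comm ((y i) ^ ((1 : ℝ) / k)) (N : ℝ), mul_div_assoc,
      mul_comm]
  have hNinv : Tendsto (fun N : ℕ => ((k : ℝ) - 1) * ((k - 1).factorial : ℝ) ^ m / (N : ℝ) ^ (m - 1))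
      atTop (𝓝 0) := by
    apply Tendsto.div_atTop tendsto_const_nhds
    exact (tendsto_pow_atTop (by omega)).comp tendsto_natCast_atTop_atTop
  have hterm : ∀ i : Fin n, Tendsto (fun N : ℕ =>
      ((((k - 1).factorial * ⌊(y i) ^ ((1 : ℝ) / k) * N / (k - 1).factorial⌋₊) ^ m
        + ⌊(y i) ^ ((1 : ℝ) / k) * N / (k - 1).factorial⌋₊ * (k - 1)
          * ((k - 1).factorial) ^ m : ℕ) : ℝ) / (N : ℝ) ^ m)
      atTop (𝓝 ((y i ^ ((1 : ℝ) / k)) ^ m)) := by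
    intro i
    have h1 : Tendsto (fun N : ℕ =>
        ((((k - 1).factorial : ℝ) * ⌊(y i) ^ ((1 : ℝ) / k) * N / (k - 1).factorial⌋₊ / N)) ^ m)
        atTop (𝓝 ((y i ^ ((1 : ℝ) / k)) ^ m)) := by
      have := ((hB i).const_mul ((k - 1).factorial : ℝ)).pow m
      have heq : ((k - 1).factorial : ℝ) * ((y i) ^ ((1 : ℝ) / k) / (k - 1).factorial)
          = y i ^ ((1 : ℝ) / k) := by
        field_simp
      rw [heq] at this
      convert this using 3 with N
      ring
    have h2 : Tendsto (fun N : ℕ =>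
        ((⌊(y i) ^ ((1 : ℝ) / k) * N / (k - 1).factorial⌋₊ : ℝ) / N)
          * (((k : ℝ) - 1) * ((k - 1).factorial : ℝ) ^ m / (N : ℝ) ^ (m - 1)))
        atTop (𝓝 0) := by
      have := (hB i).mul hNinv
      simpa using this
    have := h1.add h2
    rw [add_zero] at this
    apply this.congr'
    filter_upwards [eventually_gt_atTop 0] with N hN
    have hN0 : (N : ℝ) ≠ 0 := Nat.cast_ne_zero.2 hN.ne'
    have hNm : (N : ℝ) ^ m ≠ 0 := pow_ne_zero _ hN0
    push_cast
    rw [div_pow]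
    have hsplit : (N : ℝ) ^ m = (N : ℝ) ^ (m - 1) * N := by
      rw [← pow_succ]
      congr 1
      omega
    field_simp
    rw [hsplit]
    rw [Nat.cast_sub (by omega : 1 ≤ k), Nat.cast_one]
    ring
  have := tendsto_finset_sum Finset.univ (fun i _ => hterm i)
  apply this.congr
  intro N
  rw [countFormula hk m, ← Finset.sum_div]
  push_cast
  rfl

/-- For nonnegative reals `y_1,…,y_n` summing to `1` and `k ≥ 2`, letting `G_N` be the
disjoint union of the hyperstars `S^(k)_{b_i(N)}` with `b_i(N) = ⌊y_i^{1/k} N/(k-1)!⌋`,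
the ratio `hom(S^(k)_{kj};G_N)/hom(S^(k)_k;G_N)^j` converges to `Σ_i y_i^j` for each
`j ≥ 2`. -/
theorem hyperstar_ratio_tendsto_powerSum {n : ℕ} (y : Fin n → ℝ)
    (hy : ∀ i, 0 ≤ y i) (hsum : ∑ i, y i = 1) (k j : ℕ) (hk : 2 ≤ k) (hj : 2 ≤ j) :
    Filter.Tendsto
      (fun N : ℕ =>
        (hypHomCount (hyperstarEdges k (k * j))
            (hyperstarUnionEdges k
              (fun i => ⌊(y i) ^ ((1 : ℝ) / k) * N / (k - 1).factorial⌋₊)) : ℝ) /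
          (hypHomCount (hyperstarEdges k k)
            (hyperstarUnionEdges k
              (fun i => ⌊(y i) ^ ((1 : ℝ) / k) * N / (k - 1).factorial⌋₊)) : ℝ) ^ j)
      Filter.atTop (nhds (∑ i, y i ^ j)) := by
  have hk0 : (k : ℝ) ≠ 0 := Nat.cast_ne_zero.2 (by omega)
  have hpow1 : ∀ i, (y i ^ ((1 : ℝ) / k)) ^ k = y i := by
    intro i
    rw [← Real.rpow_natCast (y i ^ ((1 : ℝ) / k)) k, ← Real.rpow_mul (hy i)]
    rw [one_div, inv_mul_cancel₀ hk0, Real.rpow_one]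
  have hpow2 : ∀ i, (y i ^ ((1 : ℝ) / k)) ^ (k * j) = y i ^ j := by
    intro i
    rw [← Real.rpow_natCast (y i ^ ((1 : ℝ) / k)) (k * j), ← Real.rpow_mul (hy i)]
    rw [← Real.rpow_natCast (y i) j]
    congr 1
    push_cast
    field_simp
  have h2 := scaled_count_tendsto y hy k hk (k * j) (by nlinarith)
  have h1 := scaled_count_tendsto y hy k hk k hk
  simp only [hpow1, hsum] at h1
  simp only [hpow2] at h2
  have hden := h1.pow j
  rw [one_pow] at hden
  have hratio := h2.div hden one_ne_zero
  rw [div_one] at hratio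
  apply hratio.congr'
  filter_upwards [Filter.eventually_gt_atTop 0] with N hN
  have hNk : ((N : ℝ) ^ k) ≠ 0 := pow_ne_zero _ (Nat.cast_ne_zero.2 hN.ne')
  have key : ∀ (A C M : ℝ), M ≠ 0 → (A / M) / (C / M) = A / C := by
    intro A C M hM
    rcases eq_or_ne C 0 with rfl | hC
    · simp
    · field_simp
  simp only [Pi.div_apply]
  rw [div_pow, pow_mul, key _ _ _ (pow_ne_zero j hNk)]
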